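/- In the radius lower-bound graph G_{x,y}, every node u that does not belong to A has eccentricity e(u) ≥ 4. -/
import Mathlib


/-- Vertices of the radius lower-bound graph `G_{x,y}`: the bit-gadget vertices
`a i`, `b i`, `fA h`, `tA h`, `fB h`, `tB h`, together with the seven extra nodes
`cA`, `cA'` (= c̄_A), `cB`, `cB'` (= c̄_B), `w0`, `w1`, `w2`. -/
inductive RVertex (k logk : ℕ) where
  | a (i : Fin k)
  | b (i : Fin k)
  | fA (h : Fin logk)
  | tA (h : Fin logk)
  | fB (h : Fin logk)
  | tB (h : Fin logk)
  | cA
  | cA'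
  | cB
  | cB'
  | w0
  | w1
  | w2
deriving DecidableEq

/-- Base relation generating the edges of the radius lower-bound graph `G_{x,y}`. -/
def rRel (k logk : ℕ) (x y : Fin k → Bool) : RVertex k logk → RVertex k logk → Prop
  | .a i, .fA h => i.val.testBit h.val = false
  | .a i, .tA h => i.val.testBit h.val = true
  | .b i, .fB h => i.val.testBit h.val = false
  | .b i, .tB h => i.val.testBit h.val = true
  | .fA h, .tB h' => h = h'
  | .tA h, .fB h' => h = h'
  | .fA h, .tA h' => h = h'
  | .a _, .cA => True
  | .b _, .cB => True
  | .fA _, .cA' => True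
  | .tA _, .cA' => True
  | .fB _, .cB' => True
  | .tB _, .cB' => True
  | .cA, .cA' => True
  | .cB, .cB' => True
  | .cA', .cB' => True
  | .w0, .w1 => True
  | .w1, .w2 => True
  | .w0, .a _ => True
  | .a i, .cA' => x i = true
  | .b i, .cB' => y i = true
  | _, _ => False

/-- The radius lower-bound graph `G_{x,y}`. -/
def rGraph (k logk : ℕ) (x y : Fin k → Bool) : SimpleGraph (RVertex k logk) :=
  SimpleGraph.fromRel (rRel k logk x y)

/-- The eccentricity of a node: the supremum of its hop distances to all nodes. -/
noncomputable def eccent {V : Type*} (G : SimpleGraph V) (u : V) : ℕ∞ :=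
  ⨆ v, G.edist u v

/-- The radius of a graph: the minimum eccentricity of a node. -/
noncomputable def radius {V : Type*} (G : SimpleGraph V) : ℕ∞ :=
  ⨅ u, eccent G u


section PotAux
variable {V : Type*}

lemma pot_le_of_walk (G : SimpleGraph V) (f : V → ℕ)
    (hf : ∀ u v, G.Adj u v → f v ≤ f u + 1) :
    ∀ {a b : V} (w : G.Walk a b), f b ≤ f a + w.length := by
  intro a b w
  induction w with
  | nil => simp
  | cons h p ih =>
    simp only [SimpleGraph.Walk.length_cons]
    have := hf _ _ h
    omega

lemma pot_le_edist (G : SimpleGraph V) (f : V → ℕ)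
    (hf : ∀ u v, G.Adj u v → f v ≤ f u + 1) (u v : V) :
    (f v : ℕ∞) ≤ (f u : ℕ∞) + G.edist u v := by
  by_cases h : G.Reachable u v
  · obtain ⟨w, hw⟩ := h.exists_walk_length_eq_edist
    rw [← hw]
    have := pot_le_of_walk G f hf w
    exact_mod_cast this
  · rw [SimpleGraph.edist_eq_top_of_not_reachable h]
    simp

end PotAux

def pot1 {k logk : ℕ} : RVertex k logk → ℕ
  | .w2 => 0 | .w1 => 1 | .w0 => 2 | .a _ => 3 | _ => 4

def pot3 {k logk : ℕ} : RVertex k logk → ℕ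
  | .w2 => 4 | .w1 => 3 | .w0 => 2 | .a _ => 1 | _ => 0

def pot4 {k logk : ℕ} : RVertex k logk → ℕ
  | .w0 => 4 | .w1 => 4 | .w2 => 3 | .a _ => 3
  | .fA _ => 2 | .tA _ => 2 | .cA => 2 | .cA' => 2
  | .fB _ => 1 | .tB _ => 1 | .cB' => 1
  | .b _ => 0 | .cB => 0

lemma pot1_rel {k logk : ℕ} (x y : Fin k → Bool) :
    ∀ u v : RVertex k logk, rRel k logk x y u v →
      pot1 v ≤ pot1 u + 1 ∧ pot1 u ≤ pot1 v + 1 := by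
  intro u v h
  cases u <;> cases v <;> simp_all [rRel, pot1]

lemma pot3_rel {k logk : ℕ} (x y : Fin k → Bool) :
    ∀ u v : RVertex k logk, rRel k logk x y u v →
      pot3 v ≤ pot3 u + 1 ∧ pot3 u ≤ pot3 v + 1 := by
  intro u v h
  cases u <;> cases v <;> simp_all [rRel, pot3]

lemma pot4_rel {k logk : ℕ} (x y : Fin k → Bool) :
    ∀ u v : RVertex k logk, rRel k logk x y u v →
      pot4 v ≤ pot4 u + 1 ∧ pot4 u ≤ pot4 v + 1 := by
  intro u v h
  cases u <;> cases v <;> simp_all [rRel, pot4]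

lemma hf_of_rel {k logk : ℕ} (x y : Fin k → Bool) (f : RVertex k logk → ℕ)
    (key : ∀ u v : RVertex k logk, rRel k logk x y u v →
      f v ≤ f u + 1 ∧ f u ≤ f v + 1) :
    ∀ u v, (rGraph k logk x y).Adj u v → f v ≤ f u + 1 := by
  intro u v h
  rcases h.2 with h' | h'
  · exact (key u v h').1
  · exact (key v u h').2

lemma four_le_eccent_of_pot {V : Type*} (G : SimpleGraph V) (f : V → ℕ)
    (hf : ∀ u v, G.Adj u v → f v ≤ f u + 1) (u v : V) (hv : f v = 0) (hu4 : f u = 4) :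
    4 ≤ eccent G u := by
  have h := pot_le_edist G f hf v u
  rw [hv, hu4] at h
  have h2 : (4 : ℕ∞) ≤ G.edist u v := by
    rw [SimpleGraph.edist_comm]
    simpa using h
  exact le_trans h2 (le_iSup (fun w => G.edist u w) v)

/-- in the radius lower-bound graph `G_{x,y}`, every node `u` not
belonging to `A` has eccentricity at least `4`. -/
theorem rGraph_eccent_ge_four (k logk : ℕ) (hk : 2 ≤ k) (hpow : k = 2 ^ logk)
    (x y : Fin k → Bool) (u : RVertex k logk) (hu : ∀ i : Fin k, u ≠ RVertex.a i) :
    4 ≤ eccent (rGraph k logk x y) u := by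
  have hf1 := hf_of_rel (logk := logk) x y pot1 (pot1_rel x y)
  have hf3 := hf_of_rel (logk := logk) x y pot3 (pot3_rel x y)
  have hf4 := hf_of_rel (logk := logk) x y pot4 (pot4_rel x y)
  cases u with
  | a i => exact absurd rfl (hu i)
  | b i => exact four_le_eccent_of_pot _ pot1 hf1 _ RVertex.w2 rfl rfl
  | fA h => exact four_le_eccent_of_pot _ pot1 hf1 _ RVertex.w2 rfl rfl
  | tA h => exact four_le_eccent_of_pot _ pot1 hf1 _ RVertex.w2 rfl rfl
  | fB h => exact four_le_eccent_of_pot _ pot1 hf1 _ RVertex.w2 rfl rfl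
  | tB h => exact four_le_eccent_of_pot _ pot1 hf1 _ RVertex.w2 rfl rfl
  | cA => exact four_le_eccent_of_pot _ pot1 hf1 _ RVertex.w2 rfl rfl
  | cA' => exact four_le_eccent_of_pot _ pot1 hf1 _ RVertex.w2 rfl rfl
  | cB => exact four_le_eccent_of_pot _ pot1 hf1 _ RVertex.w2 rfl rfl
  | cB' => exact four_le_eccent_of_pot _ pot1 hf1 _ RVertex.w2 rfl rfl
  | w0 => exact four_le_eccent_of_pot _ pot4 hf4 _ RVertex.cB rfl rfl
  | w1 => exact four_le_eccent_of_pot _ pot4 hf4 _ RVertex.cB rfl rfl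
  | w2 => exact four_le_eccent_of_pot _ pot3 hf3 _ RVertex.cB rfl rfl
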